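/- Let G be a connected d-regular graph (d ≥ 3) with n vertices, m edges and adjacency eigenvalues λ₁,...,λₙ. Then the characteristic polynomial of the Hermitian adjacency matrix of the oriented line graph L⃗(G) equals x^{2(m−n)} · ∏_{i=1}^{n} (x² + λᵢ² − d²). -/
import Mathlib


open Polynomial Matrix
open scoped Classical

/-- Vertex type of the oriented line graph: ordered pairs of adjacent vertices. -/
abbrev OLV {V : Type*} (G : SimpleGraph V) := {p : V × V // G.Adj p.1 p.2}

/-- Arc relation of the oriented line graph: from (u,v) to (v,w) when u ≠ w. -/
def olArc {V : Type*} (G : SimpleGraph V) (a b : OLV G) : Prop :=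
  a.1.2 = b.1.1 ∧ a.1.1 ≠ b.1.2

/-- Underlying undirected graph L*(G) of the oriented line graph. -/
def Lstar {V : Type*} (G : SimpleGraph V) : SimpleGraph (OLV G) :=
  SimpleGraph.fromRel (olArc G)

section Aux
variable {V : Type*} [Fintype V] [DecidableEq V] (G : SimpleGraph V)

noncomputable def Kmat : Matrix (OLV G) (V ⊕ V) ℂ :=
  Matrix.of fun a s =>
    Sum.elim (fun v => if a.1.2 = v then (1 : ℂ) else 0)
      (fun v => if a.1.1 = v then (1 : ℂ) else 0) s

noncomputable def Lmat : Matrix (V ⊕ V) (OLV G) ℂ :=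
  Matrix.of fun s b =>
    Sum.elim (fun v => if b.1.1 = v then Complex.I else 0)
      (fun v => if b.1.2 = v then -Complex.I else 0) s

lemma sum_olv (f : V × V → ℂ) :
    ∑ a : OLV G, f a.1 = ∑ u : V, ∑ v : V, if G.Adj u v then f (u, v) else 0 := by
  classical
  rw [← Finset.subtype_univ, Finset.sum_subtype_eq_sum_filter, Finset.sum_filter,
    Fintype.sum_prod_type]

lemma H_eq_KL :
    (Matrix.of fun a b : OLV G =>
        if olArc G a b ∧ ¬ olArc G b a then Complex.I
        else if olArc G b a ∧ ¬ olArc G a b then -Complex.I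
        else if olArc G a b ∧ olArc G b a then 1 else 0) = Kmat G * Lmat G := by
  ext a b
  have h : (Kmat G * Lmat G) a b =
      (if (a : V × V).2 = (b : V × V).1 then Complex.I else 0)
        + -(if (a : V × V).1 = (b : V × V).2 then Complex.I else 0) := by
    simp [Kmat, Lmat, Matrix.mul_apply, Fintype.sum_sum_type, ite_mul, mul_ite,
      Finset.sum_ite_eq, Finset.sum_ite_eq']
  rw [h]
  simp only [Matrix.of_apply, olArc, ne_eq]
  by_cases h1 : (a : V × V).2 = (b : V × V).1 <;>
    by_cases h2 : (a : V × V).1 = (b : V × V).2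
  · simp [h1, h2]
  · have e : ¬ ((b : V × V).2 = (a : V × V).1) := fun h' => h2 h'.symm
    simp [h1, h2, e]
  · have e : ¬ ((b : V × V).1 = (a : V × V).2) := fun h' => h1 h'.symm
    simp [h1, h2, e]
  · have e : ¬ ((b : V × V).1 = (a : V × V).2) := fun h' => h1 h'.symm
    have e' : ¬ ((b : V × V).2 = (a : V × V).1) := fun h' => h2 h'.symm
    simp [h1, h2, e, e']

end Aux

section Aux2
variable {V : Type*} [Fintype V] [DecidableEq V] (G : SimpleGraph V)

lemma LK_eq (d : ℕ) (hreg : G.IsRegularOfDegree d) :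
    Lmat G * Kmat G =
      fromBlocks (Complex.I • G.adjMatrix ℂ) ((Complex.I * d) • 1)
        ((-(Complex.I * d)) • 1) ((-Complex.I) • G.adjMatrix ℂ) := by
  classical
  have hdeg : ∀ (u : V) (c : ℂ), (∑ v : V, if G.Adj u v then c else 0) = c * d := by
    intro u c
    have h1 : (∑ v : V, if G.Adj u v then c else 0) = c * ((Finset.univ.filter (G.Adj u)).card : ℂ) := by
      rw [← Finset.sum_filter, Finset.sum_const, nsmul_eq_mul, mul_comm]
    rw [h1, ← SimpleGraph.neighborFinset_eq_filter, ← SimpleGraph.degree, hreg u]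
  ext s t
  cases s with
  | inl u =>
    cases t with
    | inl v =>
      have h := sum_olv G
        (fun p => (if p.1 = u then Complex.I else 0) * (if p.2 = v then (1 : ℂ) else 0))
      simp only [Matrix.mul_apply, Lmat, Kmat, Matrix.of_apply, Sum.elim_inl]
      rw [h]
      have step : ∀ u' v' : V,
          (if G.Adj u' v' then (if u' = u then Complex.I else 0) * (if v' = v then (1:ℂ) else 0) else 0)
            = if v' = v then (if u' = u then (if G.Adj u' v' then Complex.I else 0) else 0) else 0 := by
        intro u' v'; split_ifs <;> first | rfl | simp_all | tauto
      simp_rw [step, Finset.sum_ite_eq', Finset.mem_univ, if_true]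
      simp [Matrix.fromBlocks_apply₁₁]
    | inr v =>
      have h := sum_olv G
        (fun p => (if p.1 = u then Complex.I else 0) * (if p.1 = v then (1 : ℂ) else 0))
      simp only [Matrix.mul_apply, Lmat, Kmat, Matrix.of_apply, Sum.elim_inl, Sum.elim_inr]
      rw [h]
      have step : ∀ u' : V, (∑ v' : V,
          if G.Adj u' v' then (if u' = u then Complex.I else 0) * (if u' = v then (1:ℂ) else 0) else 0)
            = if u' = u then (if u' = v then Complex.I * d else 0) else 0 := by
        intro u'
        by_cases hu : u' = u <;> by_cases hv : u' = v <;> simp [hu, hv, hdeg]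
      simp_rw [step, Finset.sum_ite_eq', Finset.mem_univ, if_true]
      simp [Matrix.fromBlocks_apply₁₂, Matrix.one_apply]
  | inr u =>
    cases t with
    | inl v =>
      have h := sum_olv G
        (fun p => (if p.2 = u then -Complex.I else 0) * (if p.2 = v then (1 : ℂ) else 0))
      simp only [Matrix.mul_apply, Lmat, Kmat, Matrix.of_apply, Sum.elim_inl, Sum.elim_inr]
      rw [h]
      have step : ∀ u' : V, (∑ v' : V,
          if G.Adj u' v' then (if v' = u then -Complex.I else 0) * (if v' = v then (1:ℂ) else 0) else 0)
            = if u = v then (if G.Adj u' u then -Complex.I else 0) else 0 := by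
        intro u'
        have e : ∀ v' : V,
            (if G.Adj u' v' then (if v' = u then -Complex.I else 0) * (if v' = v then (1:ℂ) else 0) else 0)
              = if v' = u then (if u = v then (if G.Adj u' u then -Complex.I else 0) else 0) else 0 := by
          intro v'; by_cases h1 : v' = u <;> by_cases h2 : v' = v <;>
            simp_all <;> tauto
        simp_rw [e, Finset.sum_ite_eq', Finset.mem_univ, if_true]
      simp_rw [step]
      by_cases huv : u = v
      · have e2 : ∀ u' : V, (if G.Adj u' u then -Complex.I else 0) = (if G.Adj u u' then -Complex.I else 0) := by
          intro u'; rw [SimpleGraph.adj_comm]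
        simp only [huv, eq_self_iff_true, if_true]
        rw [show (fun u' : V => if G.Adj u' v then -Complex.I else 0) = (fun u' : V => if G.Adj v u' then -Complex.I else 0) from funext fun u' => by rw [SimpleGraph.adj_comm]]
        rw [hdeg v (-Complex.I)]
        simp [Matrix.fromBlocks_apply₂₁, Matrix.one_apply, huv]
        try ring
      · simp [huv, Matrix.fromBlocks_apply₂₁, Matrix.one_apply]
    | inr v =>
      have h := sum_olv G
        (fun p => (if p.2 = u then -Complex.I else 0) * (if p.1 = v then (1 : ℂ) else 0))
      simp only [Matrix.mul_apply, Lmat, Kmat, Matrix.of_apply, Sum.elim_inr]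
      rw [h]
      have step : ∀ u' v' : V,
          (if G.Adj u' v' then (if v' = u then -Complex.I else 0) * (if u' = v then (1:ℂ) else 0) else 0)
            = if v' = u then (if u' = v then (if G.Adj u' v' then -Complex.I else 0) else 0) else 0 := by
        intro u' v'; split_ifs <;> first | rfl | simp_all | tauto
      simp_rw [step, Finset.sum_ite_eq', Finset.mem_univ, if_true]
      have h2 : G.Adj v u ↔ G.Adj u v := by rw [SimpleGraph.adj_comm]
      simp [Matrix.fromBlocks_apply₂₂, h2]
      split_ifs <;> ring
end Aux2


lemma eval_charpoly' {k : Type*} [Fintype k] [DecidableEq k] (M : Matrix k k ℂ) (x : ℂ) :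
    M.charpoly.eval x = (x • (1 : Matrix k k ℂ) - M).det := by
  rw [Matrix.charpoly, ← Polynomial.coe_evalRingHom, RingHom.map_det]
  congr 1
  ext i j
  by_cases h : i = j <;>
    simp [charmatrix_apply, Matrix.diagonal_apply, Matrix.one_apply, h]

theorem stmt_3 {V : Type*} [Fintype V] [DecidableEq V] (G : SimpleGraph V)
    (d n m : ℕ) (hd : 3 ≤ d) (hreg : G.IsRegularOfDegree d) (hconn : G.Connected)
    (hn : Fintype.card V = n) (hm : G.edgeFinset.card = m)
    (lam : Fin n → ℝ)
    (hchar : (G.adjMatrix ℂ).charpoly = ∏ i, (X - C (lam i : ℂ))) :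
    (Matrix.of fun a b : OLV G =>
        if olArc G a b ∧ ¬ olArc G b a then Complex.I
        else if olArc G b a ∧ ¬ olArc G a b then -Complex.I
        else if olArc G a b ∧ olArc G b a then 1 else 0).charpoly =
      X ^ (2 * (m - n)) * ∏ i, (X ^ 2 + C (((lam i : ℝ) ^ 2 - (d : ℝ) ^ 2 : ℝ) : ℂ)) := by
  classical
  set A : Matrix V V ℂ := G.adjMatrix ℂ with hA
  -- cardinalities
  have hcV : Fintype.card (V ⊕ V) = 2 * n := by simp [hn, two_mul]
  have hcO : Fintype.card (OLV G) = 2 * m := by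
    have e : G.Dart ≃ OLV G :=
      { toFun := fun dd => ⟨dd.toProd, dd.adj⟩
        invFun := fun a => ⟨a.1, a.2⟩
        left_inv := fun dd => rfl
        right_inv := fun a => rfl }
    rw [← Fintype.card_congr e, SimpleGraph.dart_card_eq_twice_card_edges, hm]
  have hnm : n ≤ m := by
    have hs : ∑ v : V, G.degree v = 2 * G.edgeFinset.card :=
      SimpleGraph.sum_degrees_eq_twice_card_edges G
    have hs2 : ∑ v : V, G.degree v = Fintype.card V * d := by
      rw [Finset.sum_congr rfl fun v _ => hreg v]
      simp [Finset.card_univ, mul_comm]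
    have key : n * d = 2 * m := by rw [← hn, ← hm, ← hs2, hs]
    nlinarith
  -- pass to evaluations
  apply Polynomial.eq_of_infinite_eval_eq
  have hfin : (({(0:ℂ)} : Set ℂ) ∪ {x | IsRoot (((-Complex.I) • A).charpoly) x}).Finite :=
    (Set.finite_singleton 0).union
      (Polynomial.finite_setOf_isRoot (Matrix.charpoly_monic _).ne_zero)
  refine Set.Infinite.mono ?_ hfin.infinite_compl
  intro x hx
  simp only [Set.mem_compl_iff, Set.mem_union, Set.mem_singleton_iff, not_or,
    Set.mem_setOf_eq] at hx
  obtain ⟨hx0, hxr⟩ := hx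
  simp only [Set.mem_setOf_eq]
  -- the invertible block
  set D : Matrix V V ℂ := x • 1 + Complex.I • A with hD
  have hdetD : D.det ≠ 0 := by
    have hDe : D = x • 1 - ((-Complex.I) • A) := by
      rw [neg_smul, sub_neg_eq_add]
    rw [hDe, ← eval_charpoly']
    exact hxr
  haveI : Invertible D := Matrix.invertibleOfIsUnitDet D (isUnit_iff_ne_zero.2 hdetD)
  -- eval of LHS
  rw [H_eq_KL, eval_charpoly']
  -- step 1: rectangular charpoly swap
  have swap : (x • (1 : Matrix (OLV G) (OLV G) ℂ) - Kmat G * Lmat G).det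
      = x ^ (2 * (m - n)) * (x • (1 : Matrix (V ⊕ V) (V ⊕ V) ℂ) - Lmat G * Kmat G).det := by
    have e1 : x • (1 : Matrix (OLV G) (OLV G) ℂ) - Kmat G * Lmat G
        = x • (1 + ((-x⁻¹) • Kmat G) * Lmat G) := by
      rw [Matrix.smul_mul, smul_add, smul_smul, mul_neg, mul_inv_cancel₀ hx0, neg_smul, one_smul,
        sub_eq_add_neg]
    have e2 : x • (1 : Matrix (V ⊕ V) (V ⊕ V) ℂ) - Lmat G * Kmat G
        = x • (1 + (-x⁻¹) • (Lmat G * Kmat G)) := by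
      rw [smul_add, smul_smul, mul_neg, mul_inv_cancel₀ hx0, neg_smul, one_smul, sub_eq_add_neg]
    rw [e1, e2, Matrix.det_smul, Matrix.det_smul, Matrix.det_one_add_mul_comm, Matrix.mul_smul,
      hcO, hcV, show 2 * m = 2 * (m - n) + 2 * n by omega, pow_add]
    ring
  rw [swap, LK_eq G d hreg]
  -- step 2: block determinant
  have hblocks : x • (1 : Matrix (V ⊕ V) (V ⊕ V) ℂ) -
      fromBlocks (Complex.I • A) ((Complex.I * d) • 1) ((-(Complex.I * d)) • 1) ((-Complex.I) • A)
      = fromBlocks (x • 1 - Complex.I • A) ((-(Complex.I * d)) • 1) ((Complex.I * d) • 1) D := by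
    rw [show (1 : Matrix (V ⊕ V) (V ⊕ V) ℂ) = fromBlocks 1 0 0 1 from Matrix.fromBlocks_one.symm,
      Matrix.fromBlocks_smul, sub_eq_add_neg, Matrix.fromBlocks_neg, Matrix.fromBlocks_add, hD]
    congr 1 <;> simp [sub_eq_add_neg, neg_smul] <;> try module
  rw [hblocks, Matrix.det_fromBlocks₂₂]
  -- step 3: simplify the Schur complement
  have hBC : ((-(Complex.I * d)) • (1 : Matrix V V ℂ)) * ⅟D * ((Complex.I * d) • 1)
      = ((d:ℂ)^2) • ⅟D := by
    rw [Matrix.smul_mul, Matrix.one_mul, Matrix.mul_smul, Matrix.mul_one, smul_smul,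
      show Complex.I * (d:ℂ) * -(Complex.I * (d:ℂ)) = ((d:ℂ)^2) from by
        rw [show Complex.I * (d:ℂ) * -(Complex.I * (d:ℂ))
            = -(Complex.I * Complex.I) * ((d:ℂ) * (d:ℂ)) by ring, Complex.I_mul_I]
        ring]
  rw [hBC]
  have hSchur : D.det * ((x • 1 - Complex.I • A) - ((d:ℂ)^2) • ⅟D).det
      = (((x • 1 - Complex.I • A) * D) - ((d:ℂ)^2) • (1 : Matrix V V ℂ)).det := by
    rw [mul_comm, ← Matrix.det_mul, Matrix.sub_mul, Matrix.smul_mul, invOf_mul_self]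
  rw [hSchur]
  -- step 4: multiply out
  have hPD : (x • 1 - Complex.I • A) * D = (x^2) • (1 : Matrix V V ℂ) + A * A := by
    rw [hD]
    simp only [Matrix.sub_mul, Matrix.mul_add, Matrix.mul_sub, Matrix.add_mul, Matrix.smul_mul,
      Matrix.mul_smul, smul_sub, smul_add, smul_smul, Matrix.one_mul, Matrix.mul_one]
    rw [Complex.I_mul_I]
    module
  rw [hPD]
  -- step 5: factor through eigenvalues
  obtain ⟨μ, hμ⟩ : ∃ μ : ℂ, μ ^ 2 = (d:ℂ)^2 - x^2 :=
    IsAlgClosed.exists_pow_nat_eq ((d:ℂ)^2 - x^2) (n := 2) (by norm_num)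
  have hfact : (μ • 1 - A) * ((-μ) • 1 - A)
      = (x^2) • (1 : Matrix V V ℂ) + A * A - ((d:ℂ)^2) • 1 := by
    simp only [Matrix.sub_mul, Matrix.mul_add, Matrix.mul_sub, Matrix.add_mul, Matrix.smul_mul,
      Matrix.mul_smul, smul_sub, smul_add, smul_smul, Matrix.one_mul, Matrix.mul_one]
    rw [show -μ * μ = x^2 - (d:ℂ)^2 by linear_combination -hμ]
    module
  rw [← hfact, Matrix.det_mul]
  have hd1 : (μ • (1 : Matrix V V ℂ) - A).det = ∏ i, (μ - (lam i : ℂ)) := by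
    rw [← eval_charpoly', hchar]
    simp [eval_prod]
  have hd2 : ((-μ) • (1 : Matrix V V ℂ) - A).det = ∏ i, (-μ - (lam i : ℂ)) := by
    rw [← eval_charpoly', hchar]
    simp [eval_prod]
  rw [hd1, hd2]
  -- step 6: put everything together
  rw [eval_mul, eval_pow, eval_X, eval_prod]
  rw [← Finset.prod_mul_distrib]
  congr 1
  refine Finset.prod_congr rfl fun i _ => ?_
  rw [eval_add, eval_pow, eval_X, eval_C]
  push_cast
  linear_combination -hμ
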